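/- A residuated lattice A is quasicomplemented and weakly disjunctive if and only if the lattice of principal filters of A is a Boolean lattice. -/
import Mathlib


/-- A (bounded, integral, commutative) residuated lattice. -/
class ResLattice (A : Type*) extends Lattice A, CommMonoid A, OrderBot A where
  himp : A → A → A
  adjunction : ∀ x y z : A, x * y ≤ z ↔ x ≤ himp y z
  le_one : ∀ x : A, x ≤ 1

variable {A : Type*} [ResLattice A]

/-- Coannihilator of a subset: `X^⊥ = {a | a ⊔ x = 1 for all x ∈ X}`. -/
def Coann (X : Set A) : Set A := {a | ∀ x ∈ X, a ⊔ x = 1}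

/-- Coannulet of an element: `x^⊥`. -/
def rperp (x : A) : Set A := Coann {x}

/-- The principal filter generated by `x`. -/
def PFil (x : A) : Set A := {a | ∃ n : ℕ, 0 < n ∧ x ^ n ≤ a}

/-- Filters of a residuated lattice. -/
def IsRLFilter (F : Set A) : Prop :=
  F.Nonempty ∧ (∀ x ∈ F, ∀ y ∈ F, x * y ∈ F) ∧ (∀ x ∈ F, ∀ y : A, x ⊔ y ∈ F)

/-- Prime filters. -/
def IsRLPrime (P : Set A) : Prop :=
  IsRLFilter P ∧ P ≠ Set.univ ∧ ∀ x y : A, x ⊔ y ∈ P → x ∈ P ∨ y ∈ P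

/-- Minimal prime filters. -/
def IsRLMinPrime (P : Set A) : Prop :=
  IsRLPrime P ∧ ∀ Q : Set A, IsRLPrime Q → Q ⊆ P → Q = P

/-- Quasicomplemented residuated lattice. -/
def Quasicomplemented (A : Type*) [ResLattice A] : Prop :=
  ∀ x : A, ∃ y : A, Coann (rperp x) = rperp y

/-- α-filters. -/
def IsAlphaFilter (F : Set A) : Prop :=
  IsRLFilter F ∧ ∀ x ∈ F, Coann (rperp x) ⊆ F

/-- The α-filter generated by a subset. -/
def alphaGen (X : Set A) : Set A := ⋂₀ {G : Set A | IsAlphaFilter G ∧ X ⊆ G}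


section Aux

lemma RL.mono {a b : A} (c : A) (h : a ≤ b) : a * c ≤ b * c := by
  have hb : b ≤ ResLattice.himp c (b * c) := (ResLattice.adjunction b c (b * c)).mp le_rfl
  exact (ResLattice.adjunction a c (b * c)).mpr (le_trans h hb)

lemma RL.mul_le_right {a b : A} : a * b ≤ b := by
  have := RL.mono b (ResLattice.le_one a)
  simpa using this

lemma RL.mul_le_left {a b : A} : a * b ≤ a := by
  rw [mul_comm]; exact RL.mul_le_right

lemma RL.sup_mul (a b c : A) : (a ⊔ b) * c = a * c ⊔ b * c := by
  apply le_antisymm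
  · apply (ResLattice.adjunction _ _ _).mpr
    exact sup_le ((ResLattice.adjunction _ _ _).mp le_sup_left)
      ((ResLattice.adjunction _ _ _).mp le_sup_right)
  · exact sup_le (RL.mono c le_sup_left) (RL.mono c le_sup_right)

lemma RL.mul_sup (a b c : A) : a * (b ⊔ c) = a * b ⊔ a * c := by
  rw [mul_comm, RL.sup_mul, mul_comm b a, mul_comm c a]

lemma RL.mul_le_mul {a b c d : A} (h1 : a ≤ b) (h2 : c ≤ d) : a * c ≤ b * d :=
  le_trans (RL.mono c h1) (by rw [mul_comm b c, mul_comm b d]; exact RL.mono b h2)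

lemma RL.pow_le_pow_base {a b : A} (h : a ≤ b) : ∀ n : ℕ, a ^ n ≤ b ^ n := by
  intro n
  induction n with
  | zero => simp
  | succ k ih => rw [pow_succ, pow_succ]; exact RL.mul_le_mul ih h

lemma RL.pow_le_pow {a : A} {m n : ℕ} (h : m ≤ n) : a ^ n ≤ a ^ m := by
  obtain ⟨k, rfl⟩ := Nat.exists_eq_add_of_le h
  rw [pow_add]; exact RL.mul_le_left

lemma RL.sup_pow (a b : A) : ∀ k n m : ℕ, n + m ≤ k → (a ⊔ b) ^ (n + m) ≤ a ^ n ⊔ b ^ m := by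
  intro k
  induction k with
  | zero =>
    intro n m h
    have hn : n = 0 := by omega
    have hm : m = 0 := by omega
    subst hn; subst hm; simp
  | succ k ih =>
    intro n m h
    match n, m with
    | 0, m =>
      simpa using le_trans (ResLattice.le_one _) (le_sup_left : (1:A) ≤ 1 ⊔ b ^ m)
    | n + 1, 0 =>
      simpa using le_trans (ResLattice.le_one _) (le_sup_right : (1:A) ≤ a ^ (n+1) ⊔ 1)
    | n + 1, m + 1 =>
      have h1 : (a ⊔ b) ^ (n + (m + 1)) ≤ a ^ n ⊔ b ^ (m + 1) := ih n (m + 1) (by omega)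
      have h2 : (a ⊔ b) ^ ((n + 1) + m) ≤ a ^ (n + 1) ⊔ b ^ m := ih (n + 1) m (by omega)
      have heq : (a ⊔ b) ^ (n + 1 + (m + 1)) = (a ⊔ b) * (a ⊔ b) ^ (n + (m + 1)) := by
        rw [← pow_succ']; ring_nf
      rw [heq, RL.sup_mul]
      apply sup_le
      · calc a * (a ⊔ b) ^ (n + (m + 1)) ≤ a * (a ^ n ⊔ b ^ (m + 1)) := by
              rw [mul_comm, mul_comm a (a ^ n ⊔ b ^ (m+1))]; exact RL.mono a h1
          _ = a * a ^ n ⊔ a * b ^ (m + 1) := RL.mul_sup _ _ _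
          _ ≤ a ^ (n + 1) ⊔ b ^ (m + 1) := by
              apply sup_le
              · rw [← pow_succ']; exact le_sup_left
              · exact le_trans RL.mul_le_right le_sup_right
      · have h2' : (a ⊔ b) ^ (n + (m + 1)) ≤ a ^ (n + 1) ⊔ b ^ m := by
          have : n + (m + 1) = (n + 1) + m := by omega
          rw [this]; exact h2
        calc b * (a ⊔ b) ^ (n + (m + 1)) ≤ b * (a ^ (n + 1) ⊔ b ^ m) := by
              rw [mul_comm, mul_comm b (a ^ (n+1) ⊔ b ^ m)]; exact RL.mono b h2'
          _ = b * a ^ (n + 1) ⊔ b * b ^ m := RL.mul_sup _ _ _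
          _ ≤ a ^ (n + 1) ⊔ b ^ (m + 1) := by
              apply sup_le
              · exact le_trans RL.mul_le_right le_sup_left
              · rw [← pow_succ']; exact le_sup_right

lemma RL.one_of_sup {a b : A} (h : a ⊔ b = 1) (n m : ℕ) : a ^ n ⊔ b ^ m = 1 := by
  apply le_antisymm (sup_le (ResLattice.le_one _) (ResLattice.le_one _))
  calc (1 : A) = (a ⊔ b) ^ (n + m) := by rw [h, one_pow]
    _ ≤ a ^ n ⊔ b ^ m := RL.sup_pow a b (n + m) n m le_rfl

lemma mem_rperp {a x : A} : a ∈ rperp x ↔ a ⊔ x = 1 := by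
  simp [rperp, Coann]

lemma one_mem_PFil (x : A) : (1 : A) ∈ PFil x :=
  ⟨1, one_pos, by simpa using ResLattice.le_one x⟩

lemma PFil_subset {x y : A} (h : y ∈ PFil x) : PFil y ⊆ PFil x := by
  obtain ⟨m, hm, hxy⟩ := h
  rintro a ⟨n, hn, hya⟩
  exact ⟨m * n, by positivity, by
    rw [pow_mul]; exact le_trans (RL.pow_le_pow_base hxy n) hya⟩

lemma PFil_mul_sup (x y z : A) : PFil (x * (y ⊔ z)) = PFil (x * y) ∩ PFil (x * z) := by
  rw [RL.mul_sup]
  ext a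
  constructor
  · rintro ⟨n, hn, h⟩
    exact ⟨⟨n, hn, le_trans (RL.pow_le_pow_base le_sup_left n) h⟩,
      ⟨n, hn, le_trans (RL.pow_le_pow_base le_sup_right n) h⟩⟩
  · rintro ⟨⟨n, hn, h1⟩, ⟨m, hm, h2⟩⟩
    exact ⟨n + m, by omega, le_trans (RL.sup_pow _ _ _ n m le_rfl) (sup_le h1 h2)⟩

lemma RL.helper (hcomp : ∀ x : A, ∃ y : A, PFil x ∩ PFil y = {1} ∧ PFil (x * y) = Set.univ)
    {u v : A} (h : rperp u = rperp v) : v ∈ PFil u := by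
  obtain ⟨y, hint, huniv⟩ := hcomp u
  have hxy1 : u ⊔ y = 1 := by
    have hmem : u ⊔ y ∈ PFil u ∩ PFil y :=
      ⟨⟨1, one_pos, by simpa using (le_sup_left : u ≤ u ⊔ y)⟩,
       ⟨1, one_pos, by simpa using (le_sup_right : y ≤ u ⊔ y)⟩⟩
    rw [hint] at hmem
    exact hmem
  obtain ⟨N, hN, hnil⟩ : ∃ n : ℕ, 0 < n ∧ (u * y) ^ n ≤ ⊥ := by
    have : (⊥ : A) ∈ PFil (u * y) := by rw [huniv]; trivial
    exact this
  have hyv : v ⊔ y = 1 := by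
    have : y ∈ rperp u := mem_rperp.mpr (by rw [sup_comm]; exact hxy1)
    rw [h] at this
    rw [sup_comm]; exact mem_rperp.mp this
  have hv : v ⊔ y ^ N = 1 := by simpa using RL.one_of_sup hyv 1 N
  refine ⟨N, hN, ?_⟩
  have hz : u ^ N * y ^ N = ⊥ := le_bot_iff.mp (by rw [← mul_pow]; exact hnil)
  calc u ^ N = u ^ N * (v ⊔ y ^ N) := by rw [hv, mul_one]
    _ = u ^ N * v ⊔ u ^ N * y ^ N := RL.mul_sup _ _ _
    _ = u ^ N * v ⊔ ⊥ := by rw [hz]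
    _ = u ^ N * v := sup_bot_eq _
    _ ≤ v := RL.mul_le_right

end Aux

theorem stmt8 :
    (Quasicomplemented A ∧ ∀ x y : A, rperp x = rperp y → PFil x = PFil y) ↔
      ((∀ x y z : A, PFil (x * (y ⊔ z)) = PFil (x * y) ∩ PFil (x * z)) ∧
        ∀ x : A, ∃ y : A, PFil x ∩ PFil y = {1} ∧ PFil (x * y) = Set.univ) := by
  constructor
  · rintro ⟨hqc, hwd⟩
    refine ⟨fun x y z => PFil_mul_sup x y z, fun x => ?_⟩
    obtain ⟨y, hy⟩ := hqc x
    have hxmem : x ∈ Coann (rperp x) := by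
      intro b hb
      rw [sup_comm]
      exact mem_rperp.mp hb
    have hxy1 : x ⊔ y = 1 := by
      rw [hy] at hxmem
      exact mem_rperp.mp hxmem
    refine ⟨y, ?_, ?_⟩
    · ext a
      simp only [Set.mem_inter_iff, Set.mem_singleton_iff]
      constructor
      · rintro ⟨⟨n, hn, h1⟩, ⟨m, hm, h2⟩⟩
        have h := RL.one_of_sup hxy1 n m
        exact le_antisymm (ResLattice.le_one a) (h ▸ sup_le h1 h2)
      · rintro rfl
        exact ⟨one_mem_PFil x, one_mem_PFil y⟩
    · have hperp : rperp (x * y) = rperp (⊥ : A) := by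
        ext a
        simp only [mem_rperp]
        constructor
        · intro ha
          have hax : a ⊔ x = 1 := le_antisymm (sup_le (ResLattice.le_one _) (ResLattice.le_one _))
            (by rw [← ha]; exact sup_le le_sup_left (le_trans RL.mul_le_left le_sup_right))
          have hay : a ⊔ y = 1 := le_antisymm (sup_le (ResLattice.le_one _) (ResLattice.le_one _))
            (by rw [← ha]; exact sup_le le_sup_left (le_trans RL.mul_le_right le_sup_right))
          have haC : a ∈ Coann (rperp x) := by rw [hy]; exact mem_rperp.mpr hay
          have haa : a ⊔ a = 1 := haC a (mem_rperp.mpr hax)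
          have ha1 : a = 1 := by simpa using haa
          simp [ha1]
        · intro ha
          have ha1 : a = 1 := by simpa using ha
          subst ha1
          exact sup_eq_left.mpr (ResLattice.le_one _)
      have := hwd _ _ hperp
      rw [this]
      ext a
      simp only [Set.mem_univ, iff_true]
      exact ⟨1, one_pos, by simpa using (bot_le : (⊥:A) ≤ a)⟩
  · rintro ⟨_, hcomp⟩
    constructor
    · intro x
      obtain ⟨y, hint, huniv⟩ := hcomp x
      have hxy1 : x ⊔ y = 1 := by
        have hmem : x ⊔ y ∈ PFil x ∩ PFil y :=
          ⟨⟨1, one_pos, by simpa using (le_sup_left : x ≤ x ⊔ y)⟩,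
           ⟨1, one_pos, by simpa using (le_sup_right : y ≤ x ⊔ y)⟩⟩
        rw [hint] at hmem
        exact hmem
      obtain ⟨N, hN, hnil⟩ : ∃ n : ℕ, 0 < n ∧ (x * y) ^ n ≤ ⊥ := by
        have : (⊥ : A) ∈ PFil (x * y) := by rw [huniv]; trivial
        exact this
      refine ⟨y, ?_⟩
      ext a
      constructor
      · intro ha
        have hyx : y ∈ rperp x := mem_rperp.mpr (by rw [sup_comm]; exact hxy1)
        exact mem_rperp.mpr (ha y hyx)
      · intro ha b hb
        have hay : a ⊔ y = 1 := mem_rperp.mp ha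
        have hbx : b ⊔ x = 1 := mem_rperp.mp hb
        have key : (a ⊔ b) ⊔ x * y = 1 := by
          apply le_antisymm (sup_le (ResLattice.le_one _) (ResLattice.le_one _))
          calc (1 : A) = (a ⊔ y) * (b ⊔ x) := by rw [hay, hbx, one_mul]
            _ = (a * b ⊔ a * x) ⊔ (y * b ⊔ y * x) := by
                rw [RL.sup_mul, RL.mul_sup, RL.mul_sup]
            _ ≤ (a ⊔ b) ⊔ x * y := by
                apply sup_le <;> apply sup_le
                · exact le_trans RL.mul_le_left (le_trans le_sup_left le_sup_left)
                · exact le_trans RL.mul_le_left (le_trans le_sup_left le_sup_left)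
                · exact le_trans RL.mul_le_right (le_trans le_sup_right le_sup_left)
                · rw [mul_comm]; exact le_sup_right
        have key2 : (a ⊔ b) ⊔ (x * y) ^ N = 1 := by
          simpa using RL.one_of_sup key 1 N
        have hz : (x * y) ^ N = ⊥ := le_bot_iff.mp hnil
        rw [hz, sup_bot_eq] at key2
        exact key2
    · intro u v h
      exact Set.Subset.antisymm (PFil_subset (RL.helper hcomp h.symm))
        (PFil_subset (RL.helper hcomp h))
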